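/- Let k₁, k₂, k₃ be nonzero real numbers, and for distinct indices i, j define H̄ᵢⱼ = (|kᵢ| + |kⱼ|)/2. Then 2√2 < √(|k₁|/H̄₂₃) + √(|k₂|/H̄₁₃) + √(|k₃|/H̄₁₂). -/
import Mathlib

lemma aux_le (a t : ℝ) (ha : 0 < a) (ht : 0 < t) :
    2 * Real.sqrt 2 * a / (a + t) ≤ Real.sqrt (a / (t / 2)) := by
  have hs : 0 < a + t := by linarith
  rw [Real.le_sqrt (by positivity)]
  have h2 : Real.sqrt 2 ^ 2 = 2 := Real.sq_sqrt (by norm_num)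
  rw [div_pow, div_le_div_iff₀ (by positivity) (by positivity)]
  ring_nf
  rw [h2]
  nlinarith [mul_nonneg ha.le (sq_nonneg (a - t))]
  positivity

lemma aux_lt (a t : ℝ) (ha : 0 < a) (ht : 0 < t) (hne : a ≠ t) :
    2 * Real.sqrt 2 * a / (a + t) < Real.sqrt (a / (t / 2)) := by
  have hs : 0 < a + t := by linarith
  rw [show (2 * Real.sqrt 2 * a / (a + t)) = Real.sqrt ((2 * Real.sqrt 2 * a / (a + t))^2)
      from (Real.sqrt_sq (by positivity)).symm]
  apply Real.sqrt_lt_sqrt (by positivity)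
  have h2 : Real.sqrt 2 ^ 2 = 2 := Real.sq_sqrt (by norm_num)
  rw [div_pow, div_lt_div_iff₀ (by positivity) (by positivity)]
  have hsq : 0 < (a - t)^2 := by
    have : a - t ≠ 0 := sub_ne_zero.mpr hne
    positivity
  ring_nf
  rw [h2]
  nlinarith [mul_pos ha hsq]

/-- The purely extrinsic curvature invariant
`B₀.₅⁰·⁵ = √(|k₁|/H̄₂₃) + √(|k₂|/H̄₁₃) + √(|k₃|/H̄₁₂)` is strictly bounded below by
`2√2`, where `H̄ᵢⱼ = (|kᵢ| + |kⱼ|)/2` are the absolute mean sectional curvatures. -/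
theorem sqrt_nesbitt_curvature (k₁ k₂ k₃ : ℝ) (h₁ : k₁ ≠ 0) (h₂ : k₂ ≠ 0) (h₃ : k₃ ≠ 0) :
    2 * Real.sqrt 2 <
      Real.sqrt (|k₁| / ((|k₂| + |k₃|) / 2)) + Real.sqrt (|k₂| / ((|k₁| + |k₃|) / 2)) +
        Real.sqrt (|k₃| / ((|k₁| + |k₂|) / 2)) := by
  set a := |k₁| with hadef
  set b := |k₂| with hbdef
  set c := |k₃| with hcdef
  have ha : 0 < a := abs_pos.mpr h₁
  have hb : 0 < b := abs_pos.mpr h₂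
  have hc : 0 < c := abs_pos.mpr h₃
  have hs : 0 < a + b + c := by linarith
  have hsum : 2 * Real.sqrt 2 * a / (a + (b + c)) + 2 * Real.sqrt 2 * b / (b + (a + c))
      + 2 * Real.sqrt 2 * c / (c + (a + b)) = 2 * Real.sqrt 2 := by
    field_simp
    ring
  have hkey : a ≠ b + c ∨ b ≠ a + c ∨ c ≠ a + b := by
    by_contra h
    push_neg at h
    obtain ⟨e1, e2, e3⟩ := h
    linarith
  rcases hkey with h | h | h
  · have t1 := aux_lt a (b + c) ha (by linarith) h
    have t2 := aux_le b (a + c) hb (by linarith)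
    have t3 := aux_le c (a + b) hc (by linarith)
    linarith
  · have t1 := aux_le a (b + c) ha (by linarith)
    have t2 := aux_lt b (a + c) hb (by linarith) h
    have t3 := aux_le c (a + b) hc (by linarith)
    linarith
  · have t1 := aux_le a (b + c) ha (by linarith)
    have t2 := aux_le b (a + c) hb (by linarith)
    have t3 := aux_lt c (a + b) hc (by linarith) h
    linarith
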